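/- A subspace V⁺ ⊆ W ⊕ W* of dimension n on which β is positive definite is exactly the graph of a map of the form x ↦ g(x,·) + B(x,·): for every such V⁺ there exist a unique positive definite symmetric bilinear form g on W and a unique alternating bilinear form B on W such that V⁺ = {x ⊕ (g(x,·) + B(x,·)) : x ∈ W}; and conversely, for every such pair (g, B) the set {x ⊕ (g(x,·) + B(x,·)) : x ∈ W} is an n-dimensional subspace of W ⊕ W* on which β is positive definite. Thus generalised Riemannian metrics on W ⊕ W* (maximal positive definite subspaces) correspond bijectively to pairs (g, B). -/

import Mathlib

open Module

/-- The canonical split-signature pairing `β` on `W ⊕ W*`,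
`β(x ⊕ ξ, y ⊕ η) = (ξ(y) + η(x))/2`. -/
noncomputable def genBeta {W : Type*} [AddCommGroup W] [Module ℝ W]
    (u v : W × Module.Dual ℝ W) : ℝ :=
  (u.2 v.1 + v.2 u.1) / 2

/-- The graph `{x ⊕ P(x,·)}` of a bilinear form `P` on `W`, as a subspace of `W ⊕ W*`. -/
noncomputable def genGraph {W : Type*} [AddCommGroup W] [Module ℝ W]
    (P : W →ₗ[ℝ] W →ₗ[ℝ] ℝ) : Submodule ℝ (W × Module.Dual ℝ W) :=
  LinearMap.range (LinearMap.prod (LinearMap.id : W →ₗ[ℝ] W) P)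

lemma mem_genGraph {W : Type*} [AddCommGroup W] [Module ℝ W]
    (P : W →ₗ[ℝ] W →ₗ[ℝ] ℝ) (u : W × Module.Dual ℝ W) :
    u ∈ genGraph P ↔ u.2 = P u.1 := by
  constructor
  · rintro ⟨x, rfl⟩; rfl
  · intro h; exact ⟨u.1, Prod.ext rfl h.symm⟩

lemma finrank_genGraph {W : Type*} [AddCommGroup W] [Module ℝ W]
    [FiniteDimensional ℝ W] (P : W →ₗ[ℝ] W →ₗ[ℝ] ℝ) :
    Module.finrank ℝ (genGraph P) = Module.finrank ℝ W := by
  rw [genGraph, LinearMap.finrank_range_of_inj]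
  intro x y hxy
  simpa using congrArg Prod.fst hxy

set_option maxHeartbeats 1000000 in
/-- Maximal (`n`-dimensional) `β`-positive definite subspaces
`V⁺ ⊆ W ⊕ W*` (generalised Riemannian metrics) correspond bijectively to pairs `(g, B)`
of a positive definite symmetric bilinear form `g` and an alternating bilinear form `B`
on `W`, via `V⁺ = {x ⊕ (g(x,·) + B(x,·))}`. -/
theorem generalised_metric_iff_pair (n : ℕ) (W : Type*) [AddCommGroup W] [Module ℝ W]
    [FiniteDimensional ℝ W] (hn : Module.finrank ℝ W = n) :
    (∀ V : Submodule ℝ (W × Module.Dual ℝ W),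
      Module.finrank ℝ V = n → (∀ u ∈ V, u ≠ 0 → 0 < genBeta u u) →
      ∃! gB : (W →ₗ[ℝ] W →ₗ[ℝ] ℝ) × (W →ₗ[ℝ] W →ₗ[ℝ] ℝ),
        (∀ x y : W, gB.1 x y = gB.1 y x) ∧ (∀ x : W, x ≠ 0 → 0 < gB.1 x x) ∧
        gB.2.IsAlt ∧ V = genGraph (gB.1 + gB.2)) ∧
    (∀ g B : W →ₗ[ℝ] W →ₗ[ℝ] ℝ,
      (∀ x y : W, g x y = g y x) → (∀ x : W, x ≠ 0 → 0 < g x x) → B.IsAlt →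
      Module.finrank ℝ (genGraph (g + B)) = n ∧
      (∀ u ∈ genGraph (g + B), u ≠ 0 → 0 < genBeta u u)) := by
  constructor
  · intro V hV hpos
    -- projection to W restricted to V
    set f : V →ₗ[ℝ] W := (LinearMap.fst ℝ W (Module.Dual ℝ W)).comp V.subtype with hf
    have hinj : Function.Injective f := by
      have hker : ∀ v : V, f v = 0 → v = 0 := by
        intro v hv
        have h1 : (v : W × Module.Dual ℝ W).1 = 0 := hv
        by_contra hne
        have hne' : (v : W × Module.Dual ℝ W) ≠ 0 := fun h => hne (Subtype.ext h)
        have := hpos v v.2 hne'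
        rw [genBeta, h1] at this
        simp at this
      intro a b hab
      have hsub : f (a - b) = f a - f b := rfl
      have hab' : f (a - b) = 0 := by rw [hsub, hab, sub_self]
      exact sub_eq_zero.mp (hker _ hab')
    set e : V ≃ₗ[ℝ] W := LinearMap.linearEquivOfInjective (K := ℝ) (V := V) (V₂ := W) f hinj (by rw [hV, hn]) with hedef
    have he : ∀ v : V, e v = (v : W × Module.Dual ℝ W).1 := fun v =>
      LinearMap.linearEquivOfInjective_apply hinj (by rw [hV, hn]) v
    set P : W →ₗ[ℝ] W →ₗ[ℝ] ℝ :=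
      (LinearMap.snd ℝ W (Module.Dual ℝ W)).comp (V.subtype.comp e.symm.toLinearMap) with hP
    have hPx : ∀ x : W, P x = ((e.symm x : V) : W × Module.Dual ℝ W).2 := fun x => rfl
    have hfst : ∀ x : W, ((e.symm x : V) : W × Module.Dual ℝ W).1 = x := by
      intro x
      have h := he (e.symm x)
      rw [e.apply_symm_apply] at h
      exact h.symm
    have hVP : V = genGraph P := by
      ext u
      rw [mem_genGraph]
      constructor
      · intro hu
        have key : e.symm u.1 = ⟨u, hu⟩ := by
          apply e.injective
          rw [e.apply_symm_apply, he]
        refine (?_ : P u.1 = u.2).symm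
        rw [hPx, key]
      · intro hu
        have : u = ((e.symm u.1 : V) : W × Module.Dual ℝ W) := by
          refine Prod.ext ?_ ?_
          · exact (hfst u.1).symm
          · rw [hu, hPx]
        rw [this]
        exact (e.symm u.1).2
    have hPpos : ∀ x : W, x ≠ 0 → 0 < P x x := by
      intro x hx
      have hmem : ((x, P x) : W × Module.Dual ℝ W) ∈ V := by
        rw [hVP, mem_genGraph]
      have hne : ((x, P x) : W × Module.Dual ℝ W) ≠ 0 := by
        intro h
        exact hx (congrArg Prod.fst h)
      have := hpos _ hmem hne
      rw [genBeta] at this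
      simp only at this
      linarith
    -- decompose P into symmetric and alternating parts
    refine ⟨((2⁻¹ : ℝ) • (P + P.flip), (2⁻¹ : ℝ) • (P - P.flip)), ⟨?_, ?_, ?_, ?_⟩, ?_⟩
    · intro x y
      simp [LinearMap.flip_apply]
      ring
    · intro x hx
      have := hPpos x hx
      simp [LinearMap.flip_apply]
      linarith
    · intro x
      simp [LinearMap.flip_apply]
    · have : (2⁻¹ : ℝ) • (P + P.flip) + (2⁻¹ : ℝ) • (P - P.flip) = P := by
        ext x y
        simp [LinearMap.flip_apply]
        ring
      rw [this]
      exact hVP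
    · rintro ⟨g, B⟩ ⟨hsym, hgpos, halt, hgraph⟩
      have hQP : g + B = P := by
        ext x y
        have h1 : ((x, (g + B) x) : W × Module.Dual ℝ W) ∈ V := by
          rw [hgraph, mem_genGraph]
        rw [hVP, mem_genGraph] at h1
        exact LinearMap.congr_fun h1 y
      have hskew : ∀ x y : W, B x y = - B y x := by
        intro x y
        have := halt (x + y)
        simp only [map_add, LinearMap.add_apply] at this
        rw [halt x, halt y] at this
        linarith
      have hg : g = (2⁻¹ : ℝ) • (P + P.flip) := by
        ext x y
        have h1 : g x y + B x y = P x y := by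
          have := LinearMap.congr_fun (LinearMap.congr_fun hQP x) y
          simpa using this
        have h2 : g y x + B y x = P y x := by
          have := LinearMap.congr_fun (LinearMap.congr_fun hQP y) x
          simpa using this
        simp only [LinearMap.smul_apply, LinearMap.add_apply, LinearMap.flip_apply,
          smul_eq_mul]
        rw [hsym x y] at h1 ⊢
        have := hskew x y
        linarith
      have hB : B = (2⁻¹ : ℝ) • (P - P.flip) := by
        ext x y
        have h1 : g x y + B x y = P x y := by
          have := LinearMap.congr_fun (LinearMap.congr_fun hQP x) y
          simpa using this
        have h3 : g x y = 2⁻¹ * (P x y + P y x) := by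
          rw [hg]
          simp only [LinearMap.smul_apply, LinearMap.add_apply, LinearMap.flip_apply,
            smul_eq_mul]
        simp only [LinearMap.smul_apply, LinearMap.sub_apply, LinearMap.flip_apply,
          smul_eq_mul]
        linarith
      exact Prod.ext hg hB
  · intro g B hsym hgpos halt
    constructor
    · rw [finrank_genGraph, hn]
    · intro u hu hne
      rw [mem_genGraph] at hu
      have h1 : u.1 ≠ 0 := by
        intro h
        apply hne
        have : u.2 = 0 := by rw [hu, h, map_zero]
        exact Prod.ext h this
      have hbb : genBeta u u = (g + B) u.1 u.1 := by
        rw [genBeta, hu]; ring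
      rw [hbb, LinearMap.add_apply, LinearMap.add_apply, halt u.1, add_zero]
      exact hgpos u.1 h1
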